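/- Let Z, Z' be as above, with deg_Z(P_i) = (d_1,…,d_p), and suppose there exists a good set of minimal separators {F_1,…,F_p} of P_i of multiplicity m_i. Then the Hilbert functions satisfy H_{Z'}(t) = H_Z(t) − #{ j ∈ {1,…,p} : d_j ⪯ t } for all t ∈ ℕ², where ⪯ is the componentwise partial order on ℕ². -/

import Mathlib

/-!
Formalization of statements from "Separators of fat points in ℙⁿ×ℙᵐ"
(Guardo–Van Tuyl).  The bigraded coordinate ring `R = k[x₀,…,xₙ,y₀,…,y_m]` of
`ℙⁿ×ℙᵐ` is modelled as `MvPolynomial (Fin (n+1) ⊕ Fin (m+1)) k`, where the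
variable `X (Sum.inl i)` is `xᵢ` (degree `(1,0)`) and `X (Sum.inr j)` is `yⱼ`
(degree `(0,1)`); bihomogeneity is weighted homogeneity for the weight `biWeight`.
-/

open MvPolynomial

noncomputable section

/-- The ℕ²-graded coordinate ring `R` of `ℙⁿ×ℙᵐ`. -/
abbrev BiRing (k : Type) [Field k] (n m : ℕ) : Type :=
  MvPolynomial (Fin (n + 1) ⊕ Fin (m + 1)) k

/-- The weight function on the variables giving the ℕ²-grading:
`deg xᵢ = (1,0)` and `deg yⱼ = (0,1)`. -/
def biWeight (n m : ℕ) : Fin (n + 1) ⊕ Fin (m + 1) → ℕ × ℕ :=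
  Sum.elim (fun _ => (1, 0)) (fun _ => (0, 1))

variable {k : Type} [Field k] {n m : ℕ}

/-- `F` is bihomogeneous of degree `d ∈ ℕ²`. -/
def BihomOfDeg (F : BiRing k n m) (d : ℕ × ℕ) : Prop :=
  IsWeightedHomogeneous (biWeight n m) F d

/-- `I` is the defining (prime) ideal of a point of `ℙⁿ×ℙᵐ`: it is generated by
`n` linear forms of degree `(1,0)` and `m` linear forms of degree `(0,1)` which
are linearly independent (so that they cut out a single point of `ℙⁿ×ℙᵐ`). -/
def IsPointIdeal (I : Ideal (BiRing k n m)) : Prop :=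
  ∃ (L : Fin n → BiRing k n m) (L' : Fin m → BiRing k n m),
    (∀ a, BihomOfDeg (L a) (1, 0)) ∧ (∀ b, BihomOfDeg (L' b) (0, 1)) ∧
    LinearIndependent k (Sum.elim L L') ∧
    I = Ideal.span (Set.range L ∪ Set.range L')

/-- The defining ideal `I_Z = I_{P₁}^{m₁} ∩ ⋯ ∩ I_{P_s}^{m_s}` of the fat point
scheme `Z = m₁P₁ + ⋯ + m_sP_s`. -/
def fatIdeal {s : ℕ} (P : Fin s → Ideal (BiRing k n m)) (mult : Fin s → ℕ) :
    Ideal (BiRing k n m) :=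
  ⨅ j, P j ^ mult j

/-- `F` is a separator of the point `Pᵢ` of multiplicity `mᵢ`, where `IZ = I_Z`
and `IZ' = I_{Z'}`: a bihomogeneous form lying in `I_{Z'} \ I_Z`
(equivalently `F ∈ I_{Pᵢ}^{mᵢ-1} \ I_{Pᵢ}^{mᵢ}` and `F ∈ I_{Pⱼ}^{mⱼ}` for `j ≠ i`). -/
def IsSeparator (IZ IZ' : Ideal (BiRing k n m)) (F : BiRing k n m) : Prop :=
  (∃ d, BihomOfDeg F d) ∧ F ∈ IZ' ∧ F ∉ IZ

/-- `F₁,…,F_p` is a set of minimal separators of `Pᵢ` of multiplicity `mᵢ`: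
each `Fⱼ` is a (bihomogeneous) separator, their residue classes generate the
ideal `I_{Z'}/I_Z` of `R/I_Z` (equivalently `I_Z + (F₁,…,F_p) = I_{Z'}`), and no
fewer than `p` bihomogeneous forms have classes generating `I_{Z'}/I_Z`. -/
def IsMinSepSet (IZ IZ' : Ideal (BiRing k n m)) {p : ℕ}
    (F : Fin p → BiRing k n m) : Prop :=
  (∀ j, IsSeparator IZ IZ' (F j)) ∧
  IZ ⊔ Ideal.span (Set.range F) = IZ' ∧
  ∀ q : ℕ, q < p → ∀ G : Fin q → BiRing k n m,
    (∀ j, ∃ d, BihomOfDeg (G j) d) → IZ ⊔ Ideal.span (Set.range G) ≠ IZ'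

/-- A family `F₁,…,F_p` of forms with `deg Fⱼ = d j` is a *good* set (of minimal
separators) if for every `t ∈ ℕ²` the classes of `x₀^{t₁-dⱼ₁} y₀^{t₂-dⱼ₂} Fⱼ`
(over those `j` with `d j ⪯ t` componentwise) are linearly independent in
`(I_{Z'}/I_Z)_t`; i.e. any `k`-linear combination lying in `I_Z` has all its
coefficients equal to zero. -/
def IsGoodSepSet {p : ℕ} (IZ : Ideal (BiRing k n m)) (F : Fin p → BiRing k n m)
    (d : Fin p → ℕ × ℕ) : Prop :=
  ∀ t : ℕ × ℕ, ∀ c : Fin p → k,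
    (∑ j ∈ Finset.univ.filter (fun j => (d j).1 ≤ t.1 ∧ (d j).2 ≤ t.2),
        c j • (X (Sum.inl 0) ^ (t.1 - (d j).1) * X (Sum.inr 0) ^ (t.2 - (d j).2) * F j))
      ∈ IZ →
    ∀ j : Fin p, (d j).1 ≤ t.1 → (d j).2 ≤ t.2 → c j = 0

/-- The Hilbert function of `R/I` in bidegree `t`: the `k`-dimension of the image
in `R/I` of the space of bihomogeneous polynomials of degree `t`. -/
def hilbertFn (I : Ideal (BiRing k n m)) (t : ℕ × ℕ) : ℕ :=
  Module.finrank k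
    (Submodule.map (Ideal.Quotient.mkₐ k I).toLinearMap
      (weightedHomogeneousSubmodule k (biWeight n m) t))

section Aux
variable {k : Type} [Field k] {n m : ℕ}

lemma biWeight_apply_eq (σf : (Fin (n+1) ⊕ Fin (m+1)) →₀ ℕ) :
    Finsupp.weight (biWeight n m) σf
      = (∑ a, σf (Sum.inl a), ∑ b, σf (Sum.inr b)) := by
  induction σf using Finsupp.induction_linear with
  | zero => simp; rfl
  | add f g hf hg => rw [map_add, hf, hg]; simp [Finset.sum_add_distrib, Prod.ext_iff]
  | single v e =>
    rcases v with a | b <;>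
    simp [Finsupp.weight_apply, Finsupp.sum_single_index, biWeight, Finsupp.single_apply,
      Sum.inl.injEq, Sum.inr.injEq, Finset.sum_ite_eq, Prod.ext_iff, Prod.smul_def]

end Aux
lemma weight_eq_one_zero {σf : (Fin (n+1) ⊕ Fin (m+1)) →₀ ℕ}
    (h : Finsupp.weight (biWeight n m) σf = ((1:ℕ), (0:ℕ))) :
    ∃ a, σf = Finsupp.single (Sum.inl a) 1 := by
  rw [biWeight_apply_eq, Prod.mk.injEq] at h
  obtain ⟨h1, h2⟩ := h
  have h2' : ∀ b, σf (Sum.inr b) = 0 := fun b =>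
    Finset.sum_eq_zero_iff.mp h2 b (Finset.mem_univ b)
  obtain ⟨a0, ha0⟩ : ∃ a0, σf (Sum.inl a0) ≠ 0 := by
    by_contra hc; push_neg at hc; simp [hc] at h1
  have hle := Finset.single_le_sum (f := fun a => σf (Sum.inl a))
    (fun _ _ => Nat.zero_le _) (Finset.mem_univ a0)
  rw [h1] at hle
  have h1' : σf (Sum.inl a0) = 1 := le_antisymm hle (Nat.one_le_iff_ne_zero.mpr ha0)
  refine ⟨a0, ?_⟩
  ext v
  rcases v with a | b
  · rcases eq_or_ne a a0 with rfl | hne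
    · simp [h1', Finsupp.single_apply]
    · have he : σf (Sum.inl a0) + ∑ a ∈ Finset.univ.erase a0, σf (Sum.inl a)
          = ∑ a, σf (Sum.inl a) := Finset.add_sum_erase _ (fun a => σf (Sum.inl a)) (Finset.mem_univ a0)
      rw [h1, h1'] at he
      have hz : ∑ a ∈ Finset.univ.erase a0, σf (Sum.inl a) = 0 := by omega
      have := Finset.sum_eq_zero_iff.mp hz a (Finset.mem_erase.mpr ⟨hne, Finset.mem_univ a⟩)
      simp [this, Finsupp.single_apply, (Ne.symm hne : ¬ a0 = a)]
  · simp [h2' b, Finsupp.single_apply]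

lemma weight_eq_zero_one {σf : (Fin (n+1) ⊕ Fin (m+1)) →₀ ℕ}
    (h : Finsupp.weight (biWeight n m) σf = ((0:ℕ), (1:ℕ))) :
    ∃ b, σf = Finsupp.single (Sum.inr b) 1 := by
  rw [biWeight_apply_eq, Prod.mk.injEq] at h
  obtain ⟨h1, h2⟩ := h
  have h1' : ∀ a, σf (Sum.inl a) = 0 := fun a =>
    Finset.sum_eq_zero_iff.mp h1 a (Finset.mem_univ a)
  obtain ⟨b0, hb0⟩ : ∃ b0, σf (Sum.inr b0) ≠ 0 := by
    by_contra hc; push_neg at hc; simp [hc] at h2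
  have hle := Finset.single_le_sum (f := fun b => σf (Sum.inr b))
    (fun _ _ => Nat.zero_le _) (Finset.mem_univ b0)
  rw [h2] at hle
  have h2' : σf (Sum.inr b0) = 1 := le_antisymm hle (Nat.one_le_iff_ne_zero.mpr hb0)
  refine ⟨b0, ?_⟩
  ext v
  rcases v with a | b
  · simp [h1' a, Finsupp.single_apply]
  · rcases eq_or_ne b b0 with rfl | hne
    · simp [h2', Finsupp.single_apply]
    · have he : σf (Sum.inr b0) + ∑ b ∈ Finset.univ.erase b0, σf (Sum.inr b)
          = ∑ b, σf (Sum.inr b) := Finset.add_sum_erase _ (fun b => σf (Sum.inr b)) (Finset.mem_univ b0)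
      rw [h2, h2'] at he
      have hz : ∑ b ∈ Finset.univ.erase b0, σf (Sum.inr b) = 0 := by omega
      have := Finset.sum_eq_zero_iff.mp hz b (Finset.mem_erase.mpr ⟨hne, Finset.mem_univ b⟩)
      simp [this, Finsupp.single_apply, (Ne.symm hne : ¬ b0 = b)]

lemma mem_span_X_left {g : BiRing k n m}
    (h : IsWeightedHomogeneous (biWeight n m) g ((1:ℕ), (0:ℕ))) :
    g ∈ Submodule.span k (Set.range fun a : Fin (n+1) => (X (Sum.inl a) : BiRing k n m)) := by
  rw [← g.support_sum_monomial_coeff]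
  refine Submodule.sum_mem _ fun σf hσ => ?_
  obtain ⟨a, rfl⟩ := weight_eq_one_zero (h (MvPolynomial.mem_support_iff.mp hσ))
  have hX : (monomial (Finsupp.single (Sum.inl a) 1) (coeff (Finsupp.single (Sum.inl a) 1) g)
      : BiRing k n m) = (coeff (Finsupp.single (Sum.inl a) 1) g) • X (Sum.inl a) := by
    rw [MvPolynomial.X, MvPolynomial.smul_monomial, smul_eq_mul, mul_one]
  rw [hX]
  exact Submodule.smul_mem _ _ (Submodule.subset_span ⟨a, rfl⟩)

lemma mem_span_X_right {g : BiRing k n m}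
    (h : IsWeightedHomogeneous (biWeight n m) g ((0:ℕ), (1:ℕ))) :
    g ∈ Submodule.span k (Set.range fun b : Fin (m+1) => (X (Sum.inr b) : BiRing k n m)) := by
  rw [← g.support_sum_monomial_coeff]
  refine Submodule.sum_mem _ fun σf hσ => ?_
  obtain ⟨b, rfl⟩ := weight_eq_zero_one (h (MvPolynomial.mem_support_iff.mp hσ))
  have hX : (monomial (Finsupp.single (Sum.inr b) 1) (coeff (Finsupp.single (Sum.inr b) 1) g)
      : BiRing k n m) = (coeff (Finsupp.single (Sum.inr b) 1) g) • X (Sum.inr b) := by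
    rw [MvPolynomial.X, MvPolynomial.smul_monomial, smul_eq_mul, mul_one]
  rw [hX]
  exact Submodule.smul_mem _ _ (Submodule.subset_span ⟨b, rfl⟩)

lemma linIndep_X_all :
    LinearIndependent k (fun v : Fin (n+1) ⊕ Fin (m+1) => (X v : BiRing k n m)) := by
  have hb := (MvPolynomial.basisMonomials (Fin (n+1) ⊕ Fin (m+1)) k).linearIndependent
  have h2 := hb.comp (fun v => Finsupp.single v 1)
    (Finsupp.single_left_injective one_ne_zero)
  exact MvPolynomial.linearIndependent_X (R := k) (σ := Fin (n+1) ⊕ Fin (m+1))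
lemma var_decomp_left (Q : Ideal (BiRing k n m)) (hQ : IsPointIdeal Q)
    (hx0 : X (Sum.inl 0) ∉ Q) {g : BiRing k n m}
    (hg : IsWeightedHomogeneous (biWeight n m) g ((1:ℕ), (0:ℕ))) :
    ∃ lam : k, g - lam • X (Sum.inl 0) ∈ Q := by
  obtain ⟨L, L', hL, hL', hli, rfl⟩ := hQ
  set Q : Ideal (BiRing k n m) := Ideal.span (Set.range L ∪ Set.range L') with hQdef
  set x0 : BiRing k n m := X (Sum.inl 0) with hx0def
  set Vx := Submodule.span k (Set.range fun a : Fin (n+1) => (X (Sum.inl a) : BiRing k n m))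
    with hVx
  have hspanL : Submodule.span k (Set.range L) ≤ Q.restrictScalars k := by
    rw [Submodule.span_le]
    exact fun v hv => Ideal.subset_span (Set.mem_union_left _ hv)
  have hx0span : x0 ∉ Submodule.span k (Set.range L) := fun hc => hx0 (hspanL hc)
  have hLind : LinearIndependent k L := by
    have := hli.comp Sum.inl Sum.inl_injective
    rwa [Sum.elim_comp_inl] at this
  have hcons : LinearIndependent k (Fin.cons x0 L : Fin (n+1) → BiRing k n m) :=
    hLind.fin_cons hx0span
  have hXind : LinearIndependent k (fun a : Fin (n+1) => (X (Sum.inl a) : BiRing k n m)) := by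
    have := (linIndep_X_all (k:=k) (n:=n) (m:=m)).comp Sum.inl Sum.inl_injective
    exact this
  haveI : FiniteDimensional k Vx :=
    FiniteDimensional.span_of_finite k (Set.finite_range _)
  have hWle : Submodule.span k (Set.range (Fin.cons x0 L : Fin (n+1) → BiRing k n m)) ≤ Vx := by
    rw [Submodule.span_le, Fin.range_cons]
    refine Set.insert_subset (Submodule.subset_span ⟨0, rfl⟩) ?_
    rintro v ⟨a, rfl⟩
    exact mem_span_X_left (hL a)
  have hWeq : Submodule.span k (Set.range (Fin.cons x0 L : Fin (n+1) → BiRing k n m)) = Vx := by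
    apply Submodule.eq_of_le_of_finrank_le hWle
    rw [hVx, finrank_span_eq_card hXind, finrank_span_eq_card hcons]
  have hgV : g ∈ Vx := mem_span_X_left hg
  rw [← hWeq, Fin.range_cons, Submodule.mem_span_insert] at hgV
  obtain ⟨c, z, hz, hgz⟩ := hgV
  refine ⟨c, ?_⟩
  have : g - c • x0 = z := by rw [hgz]; ring
  rw [this]
  exact hspanL hz

lemma var_decomp_right (Q : Ideal (BiRing k n m)) (hQ : IsPointIdeal Q)
    (hy0 : X (Sum.inr 0) ∉ Q) {g : BiRing k n m}
    (hg : IsWeightedHomogeneous (biWeight n m) g ((0:ℕ), (1:ℕ))) :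
    ∃ lam : k, g - lam • X (Sum.inr 0) ∈ Q := by
  obtain ⟨L, L', hL, hL', hli, rfl⟩ := hQ
  set Q : Ideal (BiRing k n m) := Ideal.span (Set.range L ∪ Set.range L') with hQdef
  set y0 : BiRing k n m := X (Sum.inr 0) with hy0def
  set Vy := Submodule.span k (Set.range fun b : Fin (m+1) => (X (Sum.inr b) : BiRing k n m))
    with hVy
  have hspanL : Submodule.span k (Set.range L') ≤ Q.restrictScalars k := by
    rw [Submodule.span_le]
    exact fun v hv => Ideal.subset_span (Set.mem_union_right _ hv)
  have hy0span : y0 ∉ Submodule.span k (Set.range L') := fun hc => hy0 (hspanL hc)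
  have hLind : LinearIndependent k L' := by
    have := hli.comp Sum.inr Sum.inr_injective
    rwa [Sum.elim_comp_inr] at this
  have hcons : LinearIndependent k (Fin.cons y0 L' : Fin (m+1) → BiRing k n m) :=
    hLind.fin_cons hy0span
  have hXind : LinearIndependent k (fun b : Fin (m+1) => (X (Sum.inr b) : BiRing k n m)) := by
    have := (linIndep_X_all (k:=k) (n:=n) (m:=m)).comp Sum.inr Sum.inr_injective
    exact this
  haveI : FiniteDimensional k Vy :=
    FiniteDimensional.span_of_finite k (Set.finite_range _)
  have hWle : Submodule.span k (Set.range (Fin.cons y0 L' : Fin (m+1) → BiRing k n m)) ≤ Vy := by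
    rw [Submodule.span_le, Fin.range_cons]
    refine Set.insert_subset (Submodule.subset_span ⟨0, rfl⟩) ?_
    rintro v ⟨b, rfl⟩
    exact mem_span_X_right (hL' b)
  have hWeq : Submodule.span k (Set.range (Fin.cons y0 L' : Fin (m+1) → BiRing k n m)) = Vy := by
    apply Submodule.eq_of_le_of_finrank_le hWle
    rw [hVy, finrank_span_eq_card hXind, finrank_span_eq_card hcons]
  have hgV : g ∈ Vy := mem_span_X_right hg
  rw [← hWeq, Fin.range_cons, Submodule.mem_span_insert] at hgV
  obtain ⟨c, z, hz, hgz⟩ := hgV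
  refine ⟨c, ?_⟩
  have : g - c • y0 = z := by rw [hgz]; ring
  rw [this]
  exact hspanL hz
lemma monomial_mod (Q : Ideal (BiRing k n m)) (hQ : IsPointIdeal Q)
    (hx0 : X (Sum.inl 0) ∉ Q) (hy0 : X (Sum.inr 0) ∉ Q)
    (σf : (Fin (n+1) ⊕ Fin (m+1)) →₀ ℕ) :
    ∃ μ : k, Ideal.Quotient.mk Q (monomial σf 1) =
      Ideal.Quotient.mk Q (C μ * X (Sum.inl 0) ^ (∑ a, σf (Sum.inl a))
        * X (Sum.inr 0) ^ (∑ b, σf (Sum.inr b))) := by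
  induction σf using Finsupp.induction with
  | zero => exact ⟨1, by simp⟩
  | single_add v e f hv he ih =>
    obtain ⟨μ', ih⟩ := ih
    have hsplit : (monomial (Finsupp.single v e + f) (1:k) : BiRing k n m)
        = X v ^ e * monomial f 1 := by
      rw [MvPolynomial.X_pow_eq_monomial, MvPolynomial.monomial_mul, one_mul]
    rcases v with a | b
    · obtain ⟨lam, hlam⟩ := var_decomp_left Q hQ hx0
        (g := X (Sum.inl a)) (isWeightedHomogeneous_X k (biWeight n m) (Sum.inl a))
      have hX : Ideal.Quotient.mk Q (X (Sum.inl a))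
          = Ideal.Quotient.mk Q (C lam * X (Sum.inl 0)) := by
        rw [Ideal.Quotient.mk_eq_mk_iff_sub_mem]
        rwa [MvPolynomial.smul_eq_C_mul] at hlam
      refine ⟨lam ^ e * μ', ?_⟩
      have hs1 : ∑ a' : Fin (n+1), ((Finsupp.single (Sum.inl a) e + f : (Fin (n+1) ⊕ Fin (m+1)) →₀ ℕ) (Sum.inl a'))
          = e + ∑ a' : Fin (n+1), f (Sum.inl a') := by
        simp [Finsupp.add_apply, Finsupp.single_apply, Finset.sum_add_distrib,
          Finset.sum_ite_eq]
      have hs2 : ∑ b' : Fin (m+1), ((Finsupp.single (Sum.inl a) e + f : (Fin (n+1) ⊕ Fin (m+1)) →₀ ℕ) (Sum.inr b'))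
          = ∑ b' : Fin (m+1), f (Sum.inr b') := by
        simp [Finsupp.add_apply, Finsupp.single_apply]
      rw [hsplit, hs1, hs2, map_mul, map_pow, hX, ih, ← map_pow, ← map_mul]
      congr 1
      rw [mul_pow, ← map_pow C lam e, map_mul, map_pow]
      ring
    · obtain ⟨lam, hlam⟩ := var_decomp_right Q hQ hy0
        (g := X (Sum.inr b)) (isWeightedHomogeneous_X k (biWeight n m) (Sum.inr b))
      have hX : Ideal.Quotient.mk Q (X (Sum.inr b))
          = Ideal.Quotient.mk Q (C lam * X (Sum.inr 0)) := by
        rw [Ideal.Quotient.mk_eq_mk_iff_sub_mem]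
        rwa [MvPolynomial.smul_eq_C_mul] at hlam
      refine ⟨lam ^ e * μ', ?_⟩
      have hs1 : ∑ a' : Fin (n+1), ((Finsupp.single (Sum.inr b) e + f : (Fin (n+1) ⊕ Fin (m+1)) →₀ ℕ) (Sum.inl a'))
          = ∑ a' : Fin (n+1), f (Sum.inl a') := by
        simp [Finsupp.add_apply, Finsupp.single_apply]
      have hs2 : ∑ b' : Fin (m+1), ((Finsupp.single (Sum.inr b) e + f : (Fin (n+1) ⊕ Fin (m+1)) →₀ ℕ) (Sum.inr b'))
          = e + ∑ b' : Fin (m+1), f (Sum.inr b') := by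
        simp [Finsupp.add_apply, Finsupp.single_apply, Finset.sum_add_distrib,
          Finset.sum_ite_eq]
      rw [hsplit, hs1, hs2, map_mul, map_pow, hX, ih, ← map_pow, ← map_mul]
      congr 1
      rw [mul_pow, ← map_pow C lam e, map_mul, map_pow]
      ring
lemma homog_decomp (Q : Ideal (BiRing k n m)) (hQ : IsPointIdeal Q)
    (hx0 : X (Sum.inl 0) ∉ Q) (hy0 : X (Sum.inr 0) ∉ Q)
    {g : BiRing k n m} {α β : ℕ}
    (hg : IsWeightedHomogeneous (biWeight n m) g (α, β)) :
    ∃ lam : k, g - lam • (X (Sum.inl 0) ^ α * X (Sum.inr 0) ^ β) ∈ Q := by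
  set ℓ := (Ideal.Quotient.mkₐ k Q).toLinearMap with hℓ
  have hspan : ℓ g ∈ Submodule.span k {ℓ (X (Sum.inl 0) ^ α * X (Sum.inr 0) ^ β)} := by
    rw [← g.support_sum_monomial_coeff, map_sum]
    refine Submodule.sum_mem _ fun σf hσ => ?_
    have hw := hg (MvPolynomial.mem_support_iff.mp hσ)
    rw [biWeight_apply_eq, Prod.mk.injEq] at hw
    obtain ⟨μ, hμ⟩ := monomial_mod Q hQ hx0 hy0 σf
    rw [hw.1, hw.2] at hμ
    have h1 : (monomial σf (coeff σf g) : BiRing k n m) = (coeff σf g) • monomial σf 1 := by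
      rw [MvPolynomial.smul_monomial, smul_eq_mul, mul_one]
    have h2 : ℓ (monomial σf 1) = μ • ℓ (X (Sum.inl 0) ^ α * X (Sum.inr 0) ^ β) := by
      have h3 : (C μ * (X (Sum.inl 0) ^ α * X (Sum.inr 0) ^ β) : BiRing k n m)
          = μ • (X (Sum.inl 0) ^ α * X (Sum.inr 0) ^ β) := (MvPolynomial.smul_eq_C_mul _ _).symm
      have h4 : ℓ (monomial σf 1) = ℓ (C μ * (X (Sum.inl 0) ^ α * X (Sum.inr 0) ^ β)) := by
        simp only [hℓ, AlgHom.toLinearMap_apply, Ideal.Quotient.mkₐ_eq_mk]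
        rw [hμ]; ring_nf
      rw [h4, h3, map_smul]
    rw [h1, map_smul, h2, smul_smul]
    exact Submodule.smul_mem _ _ (Submodule.mem_span_singleton_self _)
  obtain ⟨lam, hlam⟩ := Submodule.mem_span_singleton.mp hspan
  refine ⟨lam, ?_⟩
  have h5 : ℓ (g - lam • (X (Sum.inl 0) ^ α * X (Sum.inr 0) ^ β)) = 0 := by
    rw [map_sub, map_smul, hlam, sub_self]
  have h6 : Ideal.Quotient.mk Q (g - lam • (X (Sum.inl 0) ^ α * X (Sum.inr 0) ^ β)) = 0 := by
    simpa only [hℓ, AlgHom.toLinearMap_apply, Ideal.Quotient.mkₐ_eq_mk] using h5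
  exact (Ideal.Quotient.eq_zero_iff_mem).mp h6
instance biGraded : GradedAlgebra (weightedHomogeneousSubmodule k (biWeight n m)) :=
  weightedGradedAlgebra _ _

lemma decompose_eq_component (g : BiRing k n m) (t : ℕ × ℕ) :
    (DirectSum.decompose (weightedHomogeneousSubmodule k (biWeight n m)) g t : BiRing k n m)
      = weightedHomogeneousComponent (biWeight n m) t g :=
  MvPolynomial.decompose'_apply k (biWeight n m) g t

lemma pointIdeal_isHomogeneous {Q : Ideal (BiRing k n m)} (hQ : IsPointIdeal Q) :
    Q.IsHomogeneous (weightedHomogeneousSubmodule k (biWeight n m)) := by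
  obtain ⟨L, L', hL, hL', _, rfl⟩ := hQ
  refine Ideal.homogeneous_span _ _ fun x hx => ?_
  rcases hx with ⟨a, rfl⟩ | ⟨b, rfl⟩
  · exact ⟨((1:ℕ),(0:ℕ)), (mem_weightedHomogeneousSubmodule _ _ _ _).mpr (hL a)⟩
  · exact ⟨((0:ℕ),(1:ℕ)), (mem_weightedHomogeneousSubmodule _ _ _ _).mpr (hL' b)⟩

lemma isHomogeneous_pow {Q : Ideal (BiRing k n m)}
    (hQ : Q.IsHomogeneous (weightedHomogeneousSubmodule k (biWeight n m))) (e : ℕ) :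
    (Q ^ e).IsHomogeneous (weightedHomogeneousSubmodule k (biWeight n m)) := by
  induction e with
  | zero =>
    rw [pow_zero, Ideal.one_eq_top]
    intro t r hr
    exact Submodule.mem_top
  | succ e ih => rw [pow_succ]; exact ih.mul hQ

lemma fatIdeal_isHomogeneous {s : ℕ} (P : Fin s → Ideal (BiRing k n m))
    (hP : ∀ j, IsPointIdeal (P j)) (mult : Fin s → ℕ) :
    (fatIdeal P mult).IsHomogeneous (weightedHomogeneousSubmodule k (biWeight n m)) :=
  Ideal.IsHomogeneous.iInf fun j => isHomogeneous_pow (pointIdeal_isHomogeneous (hP j)) (mult j)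

lemma component_mem_of_mem {I : Ideal (BiRing k n m)}
    (hI : I.IsHomogeneous (weightedHomogeneousSubmodule k (biWeight n m)))
    {g : BiRing k n m} (hg : g ∈ I) (t : ℕ × ℕ) :
    weightedHomogeneousComponent (biWeight n m) t g ∈ I := by
  rw [← decompose_eq_component]
  exact hI t hg
lemma findim_S (t : ℕ × ℕ) :
    FiniteDimensional k (weightedHomogeneousSubmodule k (biWeight n m) t) := by
  set D := {σf : (Fin (n+1) ⊕ Fin (m+1)) →₀ ℕ | Finsupp.degree σf ≤ t.1 + t.2} with hD
  have hDfin : D.Finite := Finsupp.finite_of_degree_le _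
  haveI : FiniteDimensional k
      (Submodule.span k ((fun σf => (monomial σf 1 : BiRing k n m)) '' D)) :=
    FiniteDimensional.span_of_finite k (hDfin.image _)
  have hle : weightedHomogeneousSubmodule k (biWeight n m) t ≤
      Submodule.span k ((fun σf => (monomial σf 1 : BiRing k n m)) '' D) := by
    intro g hg
    rw [mem_weightedHomogeneousSubmodule] at hg
    rw [← g.support_sum_monomial_coeff]
    refine Submodule.sum_mem _ fun σf hσ => ?_
    have hw := hg (MvPolynomial.mem_support_iff.mp hσ)
    rw [biWeight_apply_eq, Prod.mk.injEq] at hw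
    have hdeg : σf ∈ D := by
      rw [hD, Set.mem_setOf_eq, Finsupp.degree_apply, ← hw.1, ← hw.2]
      have h1 : ∑ v ∈ σf.support, σf v = ∑ v, σf v :=
        Finset.sum_subset (Finset.subset_univ _)
          (fun v _ hv => Finsupp.notMem_support_iff.mp hv)
      rw [h1, Fintype.sum_sum_type]
    have h1 : (monomial σf (coeff σf g) : BiRing k n m) = (coeff σf g) • monomial σf 1 := by
      rw [MvPolynomial.smul_monomial, smul_eq_mul, mul_one]
    rw [h1]
    exact Submodule.smul_mem _ _ (Submodule.subset_span ⟨σf, hdeg, rfl⟩)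
  exact Submodule.finiteDimensional_of_le hle

lemma hilbert_eq (I : Ideal (BiRing k n m)) (t : ℕ × ℕ) :
    hilbertFn I t
      + Module.finrank k
          ↥(weightedHomogeneousSubmodule k (biWeight n m) t ⊓ I.restrictScalars k)
      = Module.finrank k ↥(weightedHomogeneousSubmodule k (biWeight n m) t) := by
  set S := weightedHomogeneousSubmodule k (biWeight n m) t with hS
  haveI : FiniteDimensional k S := findim_S t
  set f := ((Ideal.Quotient.mkₐ k I).toLinearMap.comp S.subtype) with hf
  have h1 : LinearMap.range f = Submodule.map (Ideal.Quotient.mkₐ k I).toLinearMap S := by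
    rw [hf, LinearMap.range_comp, Submodule.range_subtype]
  have h2 : LinearMap.ker f = Submodule.comap S.subtype (S ⊓ I.restrictScalars k) := by
    ext x
    simp only [hf, LinearMap.mem_ker, LinearMap.comp_apply, Submodule.subtype_apply,
      AlgHom.toLinearMap_apply, Ideal.Quotient.mkₐ_eq_mk, Submodule.mem_comap,
      Submodule.mem_inf, Submodule.restrictScalars_mem, Ideal.Quotient.eq_zero_iff_mem]
    exact ⟨fun h => ⟨x.2, h⟩, fun h => h.2⟩
  have h3 := LinearMap.finrank_range_add_finrank_ker f
  rw [h1, h2] at h3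
  have h4 : Module.finrank k ↥(Submodule.comap S.subtype (S ⊓ I.restrictScalars k))
      = Module.finrank k ↥(S ⊓ I.restrictScalars k) :=
    (Submodule.comapSubtypeEquivOfLe inf_le_left).finrank_eq
  rw [h4] at h3
  exact h3

lemma finrank_eq_add {V : Type} [AddCommGroup V] [Module k V] {A B : Submodule k V}
    (hAB : A ≤ B) [FiniteDimensional k B] {ι : Type} [Fintype ι] {G : ι → V}
    (hBeq : B = A ⊔ Submodule.span k (Set.range G))
    (hind : LinearIndependent k (fun i => A.mkQ (G i))) :
    Module.finrank k B = Module.finrank k A + Fintype.card ι := by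
  haveI : FiniteDimensional k A := Submodule.finiteDimensional_of_le hAB
  set f := A.mkQ.comp B.subtype with hf
  have hker : LinearMap.ker f = Submodule.comap B.subtype A := by
    rw [hf, LinearMap.ker_comp, Submodule.ker_mkQ]
  have hrange : LinearMap.range f = Submodule.map A.mkQ B := by
    rw [hf, LinearMap.range_comp, Submodule.range_subtype]
  have hmapA : Submodule.map A.mkQ A = ⊥ := by
    rw [eq_bot_iff]
    rintro y ⟨x, hx, rfl⟩
    simpa using (Submodule.Quotient.mk_eq_zero A).mpr hx
  have hmap : Submodule.map A.mkQ B
      = Submodule.span k (Set.range fun i => A.mkQ (G i)) := by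
    rw [hBeq, Submodule.map_sup, hmapA, bot_sup_eq, Submodule.map_span, ← Set.range_comp]
    rfl
  have h3 := LinearMap.finrank_range_add_finrank_ker f
  rw [hker, hrange, hmap, finrank_span_eq_card hind] at h3
  have h4 : Module.finrank k ↥(Submodule.comap B.subtype A) = Module.finrank k ↥A :=
    (Submodule.comapSubtypeEquivOfLe hAB).finrank_eq
  rw [h4] at h3
  omega

/-- Corollary 4.4: if `deg_Z(Pᵢ) = (d₁,…,d_p)` and there is a
good set of minimal separators `{F₁,…,F_p}` (with `deg Fⱼ = dⱼ`), then
`H_{Z'}(t) = H_Z(t) - #{j : dⱼ ⪯ t}` for all `t ∈ ℕ²`. -/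
theorem stmt8 [IsAlgClosed k] [CharZero k] {s : ℕ}
    (P : Fin s → Ideal (BiRing k n m)) (mult : Fin s → ℕ)
    (hP : ∀ j, IsPointIdeal (P j)) (hinj : Function.Injective P)
    (hmult : ∀ j, 1 ≤ mult j) (i : Fin s)
    (IZ IZ' : Ideal (BiRing k n m))
    (hIZ : IZ = fatIdeal P mult)
    (hIZ' : IZ' = fatIdeal P (Function.update mult i (mult i - 1)))
    (hx : ∀ g : BiRing k n m, X (Sum.inl 0) * g ∈ IZ → g ∈ IZ)
    (hy : ∀ g : BiRing k n m, X (Sum.inr 0) * g ∈ IZ → g ∈ IZ)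
    (hx' : ∀ g : BiRing k n m, X (Sum.inl 0) * g ∈ IZ' → g ∈ IZ')
    (hy' : ∀ g : BiRing k n m, X (Sum.inr 0) * g ∈ IZ' → g ∈ IZ')
    {p : ℕ} (F : Fin p → BiRing k n m) (d : Fin p → ℕ × ℕ)
    (hdeg : ∀ j, BihomOfDeg (F j) (d j))
    (hmin : IsMinSepSet IZ IZ' F)
    (hgood : IsGoodSepSet IZ F d) :
    ∀ t : ℕ × ℕ,
      (hilbertFn IZ' t : ℤ) =
        (hilbertFn IZ t : ℤ) -
          ((Finset.univ.filter (fun j => (d j).1 ≤ t.1 ∧ (d j).2 ≤ t.2)).card : ℤ) := by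
  intro t
  classical
  have hmule : ∀ j, Function.update mult i (mult i - 1) j ≤ mult j := by
    intro j
    rcases eq_or_ne j i with rfl | hne
    · rw [Function.update_self]; omega
    · rw [Function.update_of_ne hne]
  have hle : IZ ≤ IZ' := by
    rw [hIZ, hIZ', fatIdeal, fatIdeal]
    exact le_iInf fun j => (iInf_le _ j).trans (Ideal.pow_le_pow_right (hmule j))
  have hFmem : ∀ j, F j ∈ IZ' := fun j => (hmin.1 j).2.1
  have hmulIZ : ∀ q ∈ P i, ∀ z ∈ IZ', q * z ∈ IZ := by
    intro q hq z hz
    rw [hIZ', fatIdeal] at hz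
    rw [hIZ, fatIdeal]
    rw [Submodule.mem_iInf] at hz ⊢
    intro j
    rcases eq_or_ne j i with rfl | hne
    · have hz' := hz j
      rw [Function.update_self] at hz'
      have h2 : z * q ∈ P j ^ (mult j - 1) * P j := Ideal.mul_mem_mul hz' hq
      rw [← pow_succ] at h2
      have h4 : mult j - 1 + 1 = mult j := by have := hmult j; omega
      rw [h4] at h2
      rwa [mul_comm]
    · have hz' := hz j
      rw [Function.update_of_ne hne] at hz'
      exact Ideal.mul_mem_left _ _ hz'
  rcases Nat.eq_zero_or_pos p with hp | hp
  · subst hp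
    have hZZ : IZ = IZ' := by
      have h0 := hmin.2.1
      rw [Set.range_eq_empty F, Ideal.span_empty, sup_bot_eq] at h0
      exact h0
    rw [hZZ]
    simp
  obtain ⟨j0⟩ : Nonempty (Fin p) := ⟨⟨0, hp⟩⟩
  have hx0P : X (Sum.inl 0) ∉ P i := fun hc =>
    (hmin.1 j0).2.2 (hx _ (hmulIZ _ hc _ (hFmem j0)))
  have hy0P : X (Sum.inr 0) ∉ P i := fun hc =>
    (hmin.1 j0).2.2 (hy _ (hmulIZ _ hc _ (hFmem j0)))
  have hxpow : ∀ e : ℕ,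
      IsWeightedHomogeneous (biWeight n m) (X (Sum.inl 0) ^ e : BiRing k n m) (e, 0) := by
    intro e
    rw [MvPolynomial.X_pow_eq_monomial]
    apply isWeightedHomogeneous_monomial
    rw [biWeight_apply_eq]
    simp [Finsupp.single_apply, Finset.sum_ite_eq]
  have hypow : ∀ e : ℕ,
      IsWeightedHomogeneous (biWeight n m) (X (Sum.inr 0) ^ e : BiRing k n m) (0, e) := by
    intro e
    rw [MvPolynomial.X_pow_eq_monomial]
    apply isWeightedHomogeneous_monomial
    rw [biWeight_apply_eq]
    simp [Finsupp.single_apply, Finset.sum_ite_eq]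
  have hxyhom : ∀ α β : ℕ, IsWeightedHomogeneous (biWeight n m)
      (X (Sum.inl 0) ^ α * X (Sum.inr 0) ^ β : BiRing k n m) (α, β) := by
    intro α β
    have h1 := (hxpow α).mul (hypow β)
    have h2 : ((α, 0) + (0, β) : ℕ × ℕ) = (α, β) := by simp
    rwa [h2] at h1
  set S := weightedHomogeneousSubmodule k (biWeight n m) t with hS
  haveI : FiniteDimensional k S := findim_S t
  set A := S ⊓ IZ.restrictScalars k with hA
  set B := S ⊓ IZ'.restrictScalars k with hB
  set T := Finset.univ.filter (fun j : Fin p => (d j).1 ≤ t.1 ∧ (d j).2 ≤ t.2) with hT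
  set G : Fin p → BiRing k n m := fun j =>
    X (Sum.inl 0) ^ (t.1 - (d j).1) * X (Sum.inr 0) ^ (t.2 - (d j).2) * F j with hG
  haveI : FiniteDimensional k B := Submodule.finiteDimensional_of_le inf_le_left
  have hAB : A ≤ B := fun x hx => ⟨hx.1, hle hx.2⟩
  have hGhom : ∀ j ∈ T, IsWeightedHomogeneous (biWeight n m) (G j) t := by
    intro j hj
    rw [hT, Finset.mem_filter] at hj
    have h1 := (hxyhom (t.1 - (d j).1) (t.2 - (d j).2)).mul (hdeg j)
    have h2 : ((t.1 - (d j).1, t.2 - (d j).2) : ℕ × ℕ) + d j = t := by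
      rw [Prod.ext_iff]
      simp only [Prod.fst_add, Prod.snd_add]
      obtain ⟨hj1, hj2⟩ := hj.2
      omega
    rw [h2] at h1
    simpa [hG] using h1
  have hGB : ∀ j ∈ T, G j ∈ B := by
    intro j hj
    refine ⟨(mem_weightedHomogeneousSubmodule _ _ _ _).mpr (hGhom j hj), ?_⟩
    have : G j = (X (Sum.inl 0) ^ (t.1 - (d j).1) * X (Sum.inr 0) ^ (t.2 - (d j).2)) * F j := by
      simp [hG, mul_assoc]
    rw [this]
    exact Ideal.mul_mem_left _ _ (hFmem j)
  have hIZhom : IZ.IsHomogeneous (weightedHomogeneousSubmodule k (biWeight n m)) := by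
    rw [hIZ]; exact fatIdeal_isHomogeneous P hP mult
  have hBeq : B = A ⊔ Submodule.span k (Set.range (fun j : ↥T => G j)) := by
    apply le_antisymm
    · intro h hh
      obtain ⟨hhS, hhI'⟩ := hh
      have hhI'' : h ∈ IZ ⊔ Ideal.span (Set.range F) := by
        rw [hmin.2.1]; exact hhI'
      obtain ⟨h1, hh1, h2, hh2, hsum⟩ := Submodule.mem_sup.mp hhI''
      obtain ⟨g, hg⟩ := Ideal.mem_span_range_iff_exists_fun.mp hh2
      set π : BiRing k n m →ₗ[k] BiRing k n m := weightedHomogeneousComponent (biWeight n m) t with hπ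
      have hhhom : IsWeightedHomogeneous (biWeight n m) h t :=
        (mem_weightedHomogeneousSubmodule _ _ _ _).mp hhS
      have hπh : π h = h := hhhom.weightedHomogeneousComponent_same
      have hkey : ∀ j : Fin p, ∀ gg : BiRing k n m,
          π (gg * F j) ∈ A ⊔ Submodule.span k (Set.range (fun j : ↥T => G j)) := by
        intro j gg
        have hgg : gg * F j = ∑ σf ∈ gg.support, monomial σf (coeff σf gg) * F j := by
          conv_lhs => rw [← gg.support_sum_monomial_coeff]
          rw [Finset.sum_mul]
        rw [hgg, map_sum]
        refine Submodule.sum_mem _ fun σf _ => ?_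
        have hmono : IsWeightedHomogeneous (biWeight n m) (monomial σf (coeff σf gg))
            (Finsupp.weight (biWeight n m) σf) :=
          isWeightedHomogeneous_monomial _ _ _ rfl
        have hprod : IsWeightedHomogeneous (biWeight n m)
            (monomial σf (coeff σf gg) * F j) (Finsupp.weight (biWeight n m) σf + d j) :=
          hmono.mul (hdeg j)
        by_cases hut : Finsupp.weight (biWeight n m) σf + d j = t
        · have h1' := congrArg Prod.fst hut
          have h2' := congrArg Prod.snd hut
          simp only [Prod.fst_add, Prod.snd_add] at h1' h2'
          have hj1 : (d j).1 ≤ t.1 := by omega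
          have hj2 : (d j).2 ≤ t.2 := by omega
          have hjT : j ∈ T := by
            rw [hT]; exact Finset.mem_filter.mpr ⟨Finset.mem_univ _, hj1, hj2⟩
          have hu1 : (Finsupp.weight (biWeight n m) σf).1 = t.1 - (d j).1 := by omega
          have hu2 : (Finsupp.weight (biWeight n m) σf).2 = t.2 - (d j).2 := by omega
          have hmono'' : IsWeightedHomogeneous (biWeight n m) (monomial σf (coeff σf gg))
              ((t.1 - (d j).1, t.2 - (d j).2) : ℕ × ℕ) := by
            rw [← hu1, ← hu2, Prod.mk.eta]; exact hmono
          obtain ⟨lam, hlam⟩ := homog_decomp (P i) (hP i) hx0P hy0P hmono''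
          have hterm : π (monomial σf (coeff σf gg) * F j)
              = monomial σf (coeff σf gg) * F j :=
            (hut ▸ hprod).weightedHomogeneousComponent_same
          have hqmem : monomial σf (coeff σf gg) - lam •
              (X (Sum.inl 0) ^ (t.1 - (d j).1) * X (Sum.inr 0) ^ (t.2 - (d j).2))
              ∈ weightedHomogeneousSubmodule k (biWeight n m)
                  ((t.1 - (d j).1, t.2 - (d j).2) : ℕ × ℕ) :=
            Submodule.sub_mem _
              ((mem_weightedHomogeneousSubmodule _ _ _ _).mpr hmono'')
              (Submodule.smul_mem _ _
                ((mem_weightedHomogeneousSubmodule _ _ _ _).mpr (hxyhom _ _)))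
          have hsumdeg : ((t.1 - (d j).1, t.2 - (d j).2) : ℕ × ℕ) + d j = t := by
            rw [Prod.ext_iff]; simp only [Prod.fst_add, Prod.snd_add]; omega
          have hqprod : IsWeightedHomogeneous (biWeight n m)
              ((monomial σf (coeff σf gg) - lam •
                (X (Sum.inl 0) ^ (t.1 - (d j).1) * X (Sum.inr 0) ^ (t.2 - (d j).2))) * F j)
              (((t.1 - (d j).1, t.2 - (d j).2) : ℕ × ℕ) + d j) :=
            ((mem_weightedHomogeneousSubmodule _ _ _ _).mp hqmem).mul (hdeg j)
          rw [hsumdeg] at hqprod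
          have hqIZ : (monomial σf (coeff σf gg) - lam •
              (X (Sum.inl 0) ^ (t.1 - (d j).1) * X (Sum.inr 0) ^ (t.2 - (d j).2))) * F j ∈ IZ :=
            hmulIZ _ hlam _ (hFmem j)
          have hdecomp : monomial σf (coeff σf gg) * F j
              = lam • G j + (monomial σf (coeff σf gg) - lam •
                (X (Sum.inl 0) ^ (t.1 - (d j).1) * X (Sum.inr 0) ^ (t.2 - (d j).2))) * F j := by
            simp only [hG, MvPolynomial.smul_eq_C_mul]
            ring
          rw [hterm, hdecomp]
          refine Submodule.add_mem _
            (Submodule.mem_sup_right (Submodule.smul_mem _ _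
              (Submodule.subset_span ⟨⟨j, hjT⟩, rfl⟩)))
            (Submodule.mem_sup_left ⟨?_, ?_⟩)
          · exact (mem_weightedHomogeneousSubmodule _ _ _ _).mpr hqprod
          · exact hqIZ
        · have : π (monomial σf (coeff σf gg) * F j) = 0 :=
            hprod.weightedHomogeneousComponent_ne t (Ne.symm hut)
          rw [this]
          exact Submodule.zero_mem _
      have hfinal : h = π h1 + ∑ j, π (g j * F j) := by
        rw [← hπh]
        conv_lhs => rw [← hsum]
        rw [map_add]
        congr 1
        rw [← hg, map_sum]
      rw [hfinal]
      refine Submodule.add_mem _ (Submodule.mem_sup_left ⟨?_, ?_⟩)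
        (Submodule.sum_mem _ fun j _ => hkey j (g j))
      · exact weightedHomogeneousComponent_mem _ h1 t
      · exact component_mem_of_mem hIZhom hh1 t
    · refine sup_le hAB ?_
      rw [Submodule.span_le]
      rintro x ⟨j, rfl⟩
      exact hGB j.1 j.2
  have hind : LinearIndependent k (fun j : ↥T => A.mkQ (G j)) := by
    rw [Fintype.linearIndependent_iff]
    intro c hc
    set c' : Fin p → k := fun j => if h : j ∈ T then c ⟨j, h⟩ else 0 with hc'
    have hsum1 : ∑ j ∈ T, c' j • G j = ∑ j : ↥T, c j • G j := by
      rw [← Finset.sum_attach T (fun j => c' j • G j)]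
      apply Finset.sum_congr rfl
      intro j _
      simp only [hc']
      rw [dif_pos j.2]
    have hmem : ∑ j : ↥T, c j • G j ∈ A := by
      have h0 : A.mkQ (∑ j : ↥T, c j • G j) = 0 := by
        rw [map_sum]
        simp only [map_smul]
        exact hc
      rwa [Submodule.mkQ_apply, Submodule.Quotient.mk_eq_zero] at h0
    have hmemIZ : ∑ j ∈ T, c' j • G j ∈ IZ := by
      rw [hsum1]
      exact hmem.2
    intro j
    obtain ⟨-, hjc⟩ := Finset.mem_filter.mp j.2
    have hgj : (∑ jj ∈ Finset.univ.filter (fun jj => (d jj).1 ≤ t.1 ∧ (d jj).2 ≤ t.2),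
        c' jj • (X (Sum.inl 0) ^ (t.1 - (d jj).1) * X (Sum.inr 0) ^ (t.2 - (d jj).2) * F jj))
        ∈ IZ := by
      rw [← hT]
      simpa only [hG] using hmemIZ
    have hz0 := hgood t c' hgj j.1 hjc.1 hjc.2
    have hcc : c' ↑j = c j := by
      simp only [hc']
      exact dif_pos j.2
    rw [← hcc]
    exact hz0
  have hcount := finrank_eq_add hAB hBeq hind
  rw [Fintype.card_coe] at hcount
  have h1 := hilbert_eq IZ t
  have h2 := hilbert_eq IZ' t
  rw [← hS, ← hA] at h1
  rw [← hS, ← hB] at h2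
  omega
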